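/- Let r ≥ r* ≥ 1 and d₁, d₂ ≥ r + r*. Let M̃, M* ∈ ℝ^{d₁×d₂} satisfy rank(M̃) = r, rank(M*) = r*, M̃ M*ᵀ = 0 and M̃ᵀ M* = 0 (orthogonal column and row spaces), and suppose all nonzero singular values of M̃ and of M* equal 1. Then for every λ ≥ 0, the unique minimizer over ℝ^{d₁×d₂} of M ↦ (1/2)‖M − M̃‖_F² + λ‖M‖_* is M̂ = (1−λ)₊ M̃; moreover, for every λ ∈ [0,1], ‖M̂ − M*‖_F = √(r* + (1−λ)²·r) ≥ (1/√2)·(√(r*)·λ + √(r+r*)·(1−λ)). -/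

import Mathlib

noncomputable section

open Matrix

attribute [local instance] Matrix.normedAddCommGroup Matrix.normedSpace

/-- Euclidean norm on `ℝⁿ`. -/
def enorm {n : ℕ} (x : Fin n → ℝ) : ℝ := Real.sqrt (∑ i, x i ^ 2)

/-- Frobenius norm of a real matrix. -/
def frob {m n : ℕ} (A : Matrix (Fin m) (Fin n) ℝ) : ℝ := Real.sqrt (∑ i, ∑ j, A i j ^ 2)

/-- Trace inner product `⟨A,B⟩ = tr(AᵀB)`. -/
def tip {m n : ℕ} (A B : Matrix (Fin m) (Fin n) ℝ) : ℝ := ∑ i, ∑ j, A i j * B i j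

/-- Spectral (operator) norm: largest singular value. -/
def opNorm {m n : ℕ} (A : Matrix (Fin m) (Fin n) ℝ) : ℝ :=
  sSup {t | ∃ x : Fin n → ℝ, _root_.enorm x ≤ 1 ∧ t = _root_.enorm (A.mulVec x)}

/-- Nuclear norm: `tr √(AᴴA)`, the sum of the singular values. -/
def nucNorm {m n : ℕ} (A : Matrix (Fin m) (Fin n) ℝ) : ℝ :=
  ((Matrix.posSemidef_conjTranspose_mul_self A).1.eigenvectorUnitary.1 *
    diagonal ((RCLike.ofReal : ℝ → ℝ) ∘
      (Real.sqrt ∘ (Matrix.posSemidef_conjTranspose_mul_self A).1.eigenvalues)) *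
    (star (Matrix.posSemidef_conjTranspose_mul_self A).1.eigenvectorUnitary :
      Matrix (Fin n) (Fin n) ℝ)).trace

/-- The `j`-th largest singular value of a real matrix (`1`-indexed):
the list of square roots of eigenvalues of `AᴴA`, sorted in decreasing order. -/
def singVal {m n : ℕ} (A : Matrix (Fin m) (Fin n) ℝ) (j : ℕ) : ℝ :=
  (((List.ofFn ((by rw [IsHermitian, conjTranspose_eq_transpose_of_trivial, transpose_mul, transpose_transpose] : (Aᵀ * A).IsHermitian).eigenvalues)).map
      Real.sqrt).insertionSort (· ≥ ·)).getD (j - 1) 0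

/-- A second-order critical point of `f`: zero gradient and positive-semidefinite
Hessian quadratic form. -/
def IsSecondOrderCriticalPoint {E : Type*} [NormedAddCommGroup E] [NormedSpace ℝ E]
    (f : E → ℝ) (x : E) : Prop :=
  fderiv ℝ f x = 0 ∧ ∀ v : E, 0 ≤ fderiv ℝ (fun y => fderiv ℝ f y v) x v

/-- The gradient of `φ` at `M`, w.r.t. the trace inner product. -/
def gradM {m n : ℕ} (φ : Matrix (Fin m) (Fin n) ℝ → ℝ) (M : Matrix (Fin m) (Fin n) ℝ) :
    Matrix (Fin m) (Fin n) ℝ :=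
  Matrix.of fun i j => fderiv ℝ φ M (Matrix.single i j 1)

/-- Hessian quadratic form `∇²φ(M)[E,E]`. -/
def hess {m n : ℕ} (φ : Matrix (Fin m) (Fin n) ℝ → ℝ) (M E : Matrix (Fin m) (Fin n) ℝ) : ℝ :=
  fderiv ℝ (fun N => fderiv ℝ φ N E) M E

/-- Adjoint of a linear measurement map, w.r.t. the trace inner product. -/
def adj {m n p : ℕ} (A : Matrix (Fin m) (Fin n) ℝ →ₗ[ℝ] (Fin p → ℝ)) (ξ : Fin p → ℝ) :
    Matrix (Fin m) (Fin n) ℝ :=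
  Matrix.of fun i j => ∑ k, ξ k * A (Matrix.single i j 1) k

/-- The subspace `S_d` of `d × d` real symmetric matrices. -/
def SymSpace (d : ℕ) : Submodule ℝ (Matrix (Fin d) (Fin d) ℝ) where
  carrier := {A | Aᵀ = A}
  add_mem' := by intro a b ha hb; simp only [Set.mem_setOf_eq, Matrix.transpose_add] at *
                 rw [ha, hb]
  zero_mem' := by simp
  smul_mem' := by intro c A hA; simp only [Set.mem_setOf_eq, Matrix.transpose_smul] at *
                  rw [hA]

lemma mem_symSpace {d : ℕ} {A : Matrix (Fin d) (Fin d) ℝ} : A ∈ SymSpace d ↔ Aᵀ = A := Iff.rfl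

lemma stdBasis_symm {d : ℕ} (i j : Fin d) :
    Matrix.single i j (1:ℝ) + Matrix.single j i 1 ∈ SymSpace d := by
  rw [mem_symSpace, Matrix.transpose_add]
  ext a b
  simp only [Matrix.add_apply, Matrix.transpose_apply, Matrix.single, Matrix.of_apply]
  rw [add_comm]
  congr 1 <;> · congr 1; rw [eq_iff_iff, and_comm]

/-- The symmetrized elementary matrix `E_ij + E_ji` as an element of `S_d`. -/
def symBasis {d : ℕ} (i j : Fin d) : SymSpace d :=
  ⟨Matrix.single i j 1 + Matrix.single j i 1, stdBasis_symm i j⟩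

lemma mmT_mem {d r : ℕ} (U : Matrix (Fin d) (Fin r) ℝ) : U * Uᵀ ∈ SymSpace d := by
  rw [mem_symSpace, Matrix.transpose_mul, Matrix.transpose_transpose]

/-- `U ↦ UUᵀ` as an element of `S_d`. -/
def mmT {d r : ℕ} (U : Matrix (Fin d) (Fin r) ℝ) : SymSpace d := ⟨U * Uᵀ, mmT_mem U⟩

/-- The gradient of `φ : S_d → ℝ` at `M`, as the symmetric matrix representing the
derivative w.r.t. the trace inner product on `S_d`. -/
def gradS {d : ℕ} (φ : SymSpace d → ℝ) (M : SymSpace d) : Matrix (Fin d) (Fin d) ℝ :=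
  Matrix.of fun i j => (1/2) * fderiv ℝ φ M (symBasis i j)

/-- Hessian quadratic form of `φ : S_d → ℝ`. -/
def hessS {d : ℕ} (φ : SymSpace d → ℝ) (M E : SymSpace d) : ℝ :=
  fderiv ℝ (fun N => fderiv ℝ φ N E) M E

/-- Adjoint of a linear map `𝒜 : S_d → ℝⁿ` w.r.t. the trace inner product on `S_d`. -/
def adjS {d p : ℕ} (A : SymSpace d →ₗ[ℝ] (Fin p → ℝ)) (ξ : Fin p → ℝ) :
    Matrix (Fin d) (Fin d) ℝ :=
  Matrix.of fun i j => (1/2) * ∑ k, ξ k * A (symBasis i j) k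

/-- `P` is the orthogonal projection matrix onto the column space of `U`:
it is symmetric, idempotent, and has the same range as `U`. -/
def IsOrthProjCol {d r : ℕ} (P : Matrix (Fin d) (Fin d) ℝ) (U : Matrix (Fin d) (Fin r) ℝ) :
    Prop :=
  Pᵀ = P ∧ P * P = P ∧ P * U = U ∧ ∃ W : Matrix (Fin r) (Fin d) ℝ, P = U * W


-- ========== auxiliary lemmas ==========
section Aux
variable {m n : ℕ}

lemma tip_self_nonneg (A : Matrix (Fin m) (Fin n) ℝ) : 0 ≤ tip A A :=
  Finset.sum_nonneg fun _ _ => Finset.sum_nonneg fun _ _ => mul_self_nonneg _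

lemma frob_eq (A : Matrix (Fin m) (Fin n) ℝ) : frob A = Real.sqrt (tip A A) := by
  simp [frob, tip, sq]

lemma frob_sq (A : Matrix (Fin m) (Fin n) ℝ) : frob A ^ 2 = tip A A := by
  rw [frob_eq, Real.sq_sqrt (tip_self_nonneg A)]

lemma tip_comm (A B : Matrix (Fin m) (Fin n) ℝ) : tip A B = tip B A := by
  simp [tip, mul_comm]

lemma tip_sub_left (A B C : Matrix (Fin m) (Fin n) ℝ) :
    tip (A - B) C = tip A C - tip B C := by
  simp [tip, sub_mul, Finset.sum_sub_distrib]

lemma tip_sub_right (A B C : Matrix (Fin m) (Fin n) ℝ) :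
    tip A (B - C) = tip A B - tip A C := by
  simp [tip, mul_sub, Finset.sum_sub_distrib]

lemma tip_smul_left (c : ℝ) (A B : Matrix (Fin m) (Fin n) ℝ) :
    tip (c • A) B = c * tip A B := by
  simp [tip, Finset.mul_sum, mul_assoc]

lemma tip_smul_right (c : ℝ) (A B : Matrix (Fin m) (Fin n) ℝ) :
    tip A (c • B) = c * tip A B := by
  rw [tip_comm, tip_smul_left, tip_comm]

lemma tip_eq_trace (A B : Matrix (Fin m) (Fin n) ℝ) : tip A B = (Aᵀ * B).trace := by
  simp [tip, Matrix.trace, Matrix.mul_apply, Matrix.diag]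
  rw [Finset.sum_comm]

lemma tip_eq_traceH (A B : Matrix (Fin m) (Fin n) ℝ) : tip A B = (Aᴴ * B).trace := by
  simp [tip, Matrix.trace, Matrix.mul_apply, Matrix.diag, Matrix.conjTranspose_apply]
  rw [Finset.sum_comm]

lemma tip_eq_zero_of_orth (A B : Matrix (Fin m) (Fin n) ℝ) (h : Aᵀ * B = 0) : tip A B = 0 := by
  rw [tip_eq_trace, h, Matrix.trace_zero]

lemma eq_of_tip_self_nonpos {A : Matrix (Fin m) (Fin n) ℝ} (h : tip A A ≤ 0) : A = 0 := by
  ext i j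
  have h0 : ∀ i' ∈ Finset.univ, (0:ℝ) ≤ ∑ j, A i' j * A i' j :=
    fun i' _ => Finset.sum_nonneg fun j _ => mul_self_nonneg _
  have h1 : ∑ i', ∑ j', A i' j' * A i' j' = 0 := le_antisymm h (tip_self_nonneg A)
  have h2 := (Finset.sum_eq_zero_iff_of_nonneg h0).mp h1 i (Finset.mem_univ i)
  have h3 := (Finset.sum_eq_zero_iff_of_nonneg
    (fun j' _ => mul_self_nonneg (A i j'))).mp h2 j (Finset.mem_univ j)
  simpa [mul_self_eq_zero] using h3

lemma trace_sqrt_eq {k : ℕ} {A : Matrix (Fin k) (Fin k) ℝ} (hA : A.PosSemidef) :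
    (hA.1.eigenvectorUnitary.1 *
      diagonal ((RCLike.ofReal : ℝ → ℝ) ∘ (Real.sqrt ∘ hA.1.eigenvalues)) *
      (star hA.1.eigenvectorUnitary : Matrix (Fin k) (Fin k) ℝ)).trace
      = ∑ i, Real.sqrt (hA.1.eigenvalues i) := by
  rw [Matrix.trace_mul_cycle]
  rw [show (star hA.1.eigenvectorUnitary.1 : Matrix (Fin k) (Fin k) ℝ) * hA.1.eigenvectorUnitary.1 = 1
      from Matrix.mem_unitaryGroup_iff'.mp hA.1.eigenvectorUnitary.2]
  simp [Matrix.trace_diagonal]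

lemma nucNorm_nonneg (A : Matrix (Fin m) (Fin n) ℝ) : 0 ≤ nucNorm A := by
  rw [nucNorm, trace_sqrt_eq (Matrix.posSemidef_conjTranspose_mul_self A)]
  exact Finset.sum_nonneg fun i _ => Real.sqrt_nonneg _

lemma conj_diag {k : ℕ} {H : Matrix (Fin k) (Fin k) ℝ} (hH : H.IsHermitian) :
    (hH.eigenvectorUnitary.1)ᴴ * H * hH.eigenvectorUnitary.1 = diagonal hH.eigenvalues := by
  set U : Matrix (Fin k) (Fin k) ℝ := hH.eigenvectorUnitary.1 with hU
  have hUU' : Uᴴ * U = 1 := Matrix.mem_unitaryGroup_iff'.mp hH.eigenvectorUnitary.2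
  have hsp : H = U * diagonal (RCLike.ofReal ∘ hH.eigenvalues) * Uᴴ := hH.spectral_theorem
  calc Uᴴ * H * U = Uᴴ * (U * diagonal (RCLike.ofReal ∘ hH.eigenvalues) * Uᴴ) * U := by
        rw [← hsp]
    _ = (Uᴴ * U) * diagonal (RCLike.ofReal ∘ hH.eigenvalues) * (Uᴴ * U) := by
        simp only [Matrix.mul_assoc]
    _ = diagonal hH.eigenvalues := by
        rw [hUU', Matrix.one_mul, Matrix.mul_one]; simp [RCLike.ofReal_real_eq_id]

lemma eig_of_sq {k : ℕ} {H : Matrix (Fin k) (Fin k) ℝ} (hH : H.IsHermitian) (a : ℝ)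
    (h : H * H = a • H) (i : Fin k) :
    hH.eigenvalues i * hH.eigenvalues i = a * hH.eigenvalues i := by
  set U : Matrix (Fin k) (Fin k) ℝ := hH.eigenvectorUnitary.1 with hU
  have hUU : U * Uᴴ = 1 := Matrix.mem_unitaryGroup_iff.mp hH.eigenvectorUnitary.2
  have hd := conj_diag hH
  have hDD : diagonal hH.eigenvalues * diagonal hH.eigenvalues
      = a • diagonal hH.eigenvalues := by
    rw [← hd]
    calc Uᴴ * H * U * (Uᴴ * H * U) = Uᴴ * (H * (U * Uᴴ) * H) * U := by
          simp only [Matrix.mul_assoc]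
      _ = a • (Uᴴ * H * U) := by
          rw [hUU, Matrix.mul_one, h, Matrix.mul_smul, Matrix.smul_mul]
  have := congrFun (congrFun hDD i) i
  simpa [Matrix.diagonal_mul_diagonal] using this

lemma colDot {p q : ℕ} (X Y : Matrix (Fin p) (Fin q) ℝ) (j : Fin q) :
    (Xᴴ * Y) j j = ∑ i, X i j * Y i j := by
  simp [Matrix.mul_apply, Matrix.conjTranspose_apply]

lemma trace_duality (A M : Matrix (Fin m) (Fin n) ℝ)
    (hproj : (Aᴴ * A) * (Aᴴ * A) = Aᴴ * A) : tip A M ≤ nucNorm M := by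
  classical
  set hM := Matrix.posSemidef_conjTranspose_mul_self M with hMdef
  set U : Matrix (Fin n) (Fin n) ℝ := hM.1.eigenvectorUnitary.1 with hU
  have hUU : U * Uᴴ = 1 := Matrix.mem_unitaryGroup_iff.mp hM.1.eigenvectorUnitary.2
  have hUU' : Uᴴ * U = 1 := Matrix.mem_unitaryGroup_iff'.mp hM.1.eigenvectorUnitary.2
  have hdiag : Uᴴ * (Mᴴ * M) * U = diagonal (hM.1.eigenvalues) := by
    exact conj_diag hM.1
  have step1 : tip A M = ((A * U)ᴴ * (M * U)).trace := by
    rw [tip_eq_traceH]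
    have h2 : (A * U)ᴴ * (M * U) = Uᴴ * (Aᴴ * M) * U := by
      rw [Matrix.conjTranspose_mul]; simp only [Matrix.mul_assoc]
    rw [h2, Matrix.trace_mul_cycle]
    rw [← Matrix.mul_assoc, hUU, Matrix.one_mul]
  have hMU : ∀ j, ∑ i, (M * U) i j * (M * U) i j = hM.1.eigenvalues j := by
    intro j
    have h3 : ((M * U)ᴴ * (M * U)) j j = diagonal (hM.1.eigenvalues) j j := by
      rw [show (M * U)ᴴ * (M * U) = Uᴴ * (Mᴴ * M) * U from by
        rw [Matrix.conjTranspose_mul]; simp only [Matrix.mul_assoc], hdiag]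
    rw [← colDot, h3, Matrix.diagonal_apply_eq]
  have hAU : ∀ j, ∑ i, (A * U) i j * (A * U) i j ≤ 1 := by
    intro j
    set Q : Matrix (Fin n) (Fin n) ℝ := (A * U)ᴴ * (A * U) with hQ
    have hQsym : ∀ a b, Q a b = Q b a := by
      intro a b
      have h4 : Qᴴ = Q := by rw [hQ, Matrix.conjTranspose_mul, Matrix.conjTranspose_conjTranspose]
      conv_lhs => rw [← h4]
      simp [Matrix.conjTranspose_apply]
    have hQidem : Q * Q = Q := by
      rw [hQ, show (A*U)ᴴ * (A*U) = Uᴴ * (Aᴴ * A) * U from by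
        rw [Matrix.conjTranspose_mul]; simp only [Matrix.mul_assoc]]
      calc Uᴴ * (Aᴴ * A) * U * (Uᴴ * (Aᴴ * A) * U)
          = Uᴴ * ((Aᴴ * A) * (U * Uᴴ) * (Aᴴ * A)) * U := by simp only [Matrix.mul_assoc]
        _ = Uᴴ * (Aᴴ * A) * U := by rw [hUU, Matrix.mul_one, hproj]
    have hdiagQ : ∑ i, (A * U) i j * (A * U) i j = Q j j := (colDot _ _ j).symm
    have hQQ : Q j j = ∑ i, Q i j * Q i j := by
      conv_lhs => rw [← hQidem]
      rw [Matrix.mul_apply]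
      exact Finset.sum_congr rfl fun i _ => by rw [hQsym j i]
    have h1 : Q j j * Q j j ≤ Q j j := by
      calc Q j j * Q j j ≤ ∑ i, Q i j * Q i j :=
            Finset.single_le_sum (fun i _ => mul_self_nonneg (Q i j)) (Finset.mem_univ j)
        _ = Q j j := hQQ.symm
    rw [hdiagQ]
    nlinarith [h1]
  have step2 : ((A * U)ᴴ * (M * U)).trace ≤ ∑ j, Real.sqrt (hM.1.eigenvalues j) := by
    rw [Matrix.trace]
    refine Finset.sum_le_sum fun j _ => ?_
    have hentry : ((A * U)ᴴ * (M * U)).diag j = ∑ i, (A * U) i j * (M * U) i j := colDot _ _ j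
    rw [hentry]
    have hcs : (∑ i, (A * U) i j * (M * U) i j) ^ 2 ≤
        (∑ i, (A * U) i j ^ 2) * ∑ i, (M * U) i j ^ 2 :=
      Finset.sum_mul_sq_le_sq_mul_sq _ _ _
    simp only [sq] at hcs
    calc ∑ i, (A * U) i j * (M * U) i j
        ≤ Real.sqrt ((∑ i, (A * U) i j * (M * U) i j) ^ 2) := by
          rw [Real.sqrt_sq_eq_abs]; exact le_abs_self _
      _ ≤ Real.sqrt ((∑ i, (A * U) i j * (A * U) i j) * ∑ i, (M * U) i j * (M * U) i j) := by
          apply Real.sqrt_le_sqrt; rw [sq]; exact hcs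
      _ ≤ Real.sqrt (1 * hM.1.eigenvalues j) := by
          apply Real.sqrt_le_sqrt
          rw [hMU j]
          exact mul_le_mul_of_nonneg_right (hAU j) (hM.eigenvalues_nonneg j)
      _ = Real.sqrt (hM.1.eigenvalues j) := by rw [one_mul]
  have hnuc : nucNorm M = ∑ j, Real.sqrt (hM.1.eigenvalues j) := trace_sqrt_eq hM
  rw [step1, hnuc]
  exact step2

lemma eig_analysis (A : Matrix (Fin m) (Fin n) ℝ) (k : ℕ)
    (hrk : A.rank = k) (hs : ∀ j : ℕ, 1 ≤ j → j ≤ k → singVal A j = 1) :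
    ∀ i, (Matrix.isHermitian_conjTranspose_mul_self A).eigenvalues i = 0 ∨
         (Matrix.isHermitian_conjTranspose_mul_self A).eigenvalues i = 1 := by
  classical
  set hH := Matrix.isHermitian_conjTranspose_mul_self A with hHdef
  set g : Fin n → ℝ := hH.eigenvalues with hg
  have hg0 : ∀ i, 0 ≤ g i := fun i =>
    (Matrix.posSemidef_conjTranspose_mul_self A).eigenvalues_nonneg i
  set l : List ℝ := (List.ofFn g).map Real.sqrt with hl
  set sl : List ℝ := l.insertionSort (· ≥ ·) with hsl
  have hperm : sl.Perm l := List.perm_insertionSort _ _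
  have hlenl : l.length = n := by simp [hl]
  have hlen : sl.length = n := by rw [hsl, List.length_insertionSort, hlenl]
  have hsort : sl.Pairwise (· ≥ ·) := List.pairwise_insertionSort _ _
  have hmem : ∀ x ∈ sl, 0 ≤ x := by
    intro x hx
    rw [hperm.mem_iff, hl, List.mem_map] at hx
    obtain ⟨y, -, rfl⟩ := hx
    exact Real.sqrt_nonneg y
  have hones : ∀ i : ℕ, i < k → i < n → sl.getD i 0 = 1 := by
    intro i hik hin
    exact hs (i+1) (Nat.le_add_left 1 i) hik
  have hcard : (Finset.univ.filter (fun i => g i ≠ 0)).card = k := by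
    rw [← Fintype.card_subtype]
    rw [← hH.rank_eq_card_non_zero_eigs, Matrix.rank_conjTranspose_mul_self, hrk]
  have hcount : sl.countP (fun x => decide (x ≠ 0)) = k := by
    rw [hperm.countP_eq, hl, List.ofFn_eq_map, List.map_map, List.countP_map,
      List.countP_eq_length_filter]
    have key : ∀ q : Fin n → Bool,
        (List.filter q (List.finRange n)).length = (Finset.univ.filter (fun i => q i)).card := by
      intro q
      rw [Fin.univ_def]
      simp [Finset.filter, Finset.card]
    rw [key]
    rw [← hcard]
    apply Finset.card_nbij (fun a => a) (fun a ha => ?_) (fun a _ b _ h => h) (fun b hb => ?_)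
    · simp only [Finset.mem_coe, Finset.mem_filter, Finset.mem_univ, true_and,
        Function.comp_apply, decide_eq_true_eq] at ha ⊢
      intro h0
      exact ha (by rw [h0, Real.sqrt_zero])
    · simp only [Finset.mem_coe, Finset.mem_filter, Finset.mem_univ, true_and,
        decide_eq_true_eq, Set.mem_image] at hb ⊢
      refine ⟨b, ?_, rfl⟩
      simp only [Finset.mem_coe, Finset.mem_filter, Finset.mem_univ, true_and,
        Function.comp_apply, decide_eq_true_eq]
      intro h0
      exact hb ((Real.sqrt_eq_zero (hg0 b)).mp h0)
  have hzeros : ∀ i : ℕ, k ≤ i → i < n → sl.getD i 0 = 0 := by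
    intro i hki hin
    have hilen : i < sl.length := by rw [hlen]; exact hin
    rw [List.getD_eq_getElem sl 0 hilen]
    by_contra hne
    have hpos : 0 < sl[i] :=
      lt_of_le_of_ne (hmem _ (List.getElem_mem hilen)) (Ne.symm hne)
    have htakelen : (sl.take (i+1)).length = i+1 := by
      rw [List.length_take]; omega
    have htake : ∀ x ∈ sl.take (i+1), (fun x => decide (x ≠ 0)) x = true := by
      intro x hx
      rw [List.mem_iff_getElem] at hx
      obtain ⟨j, hj, rfl⟩ := hx
      have hj' : j < i + 1 := by rw [htakelen] at hj; omega
      have hjlen : j < sl.length := by omega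
      rw [List.getElem_take]
      have hge : sl[i] ≤ sl[j] := by
        rcases Nat.lt_or_ge j i with h | h
        · exact List.pairwise_iff_getElem.mp hsort j i hjlen hilen h
        · have : j = i := by omega
          subst this; exact le_refl _
      simp only [decide_eq_true_eq]
      exact ne_of_gt (lt_of_lt_of_le hpos hge)
    have hsplit : sl.countP (fun x => decide (x ≠ 0)) =
        (sl.take (i+1)).countP (fun x => decide (x ≠ 0))
          + (sl.drop (i+1)).countP (fun x => decide (x ≠ 0)) := by
      conv_lhs => rw [← List.take_append_drop (i+1) sl]
      rw [List.countP_append]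
    have : i + 1 ≤ k := by
      rw [← hcount, hsplit, List.countP_eq_length.mpr htake, htakelen]
      omega
    omega
  have h01 : ∀ x ∈ sl, x = 0 ∨ x = 1 := by
    intro x hx
    rw [List.mem_iff_getElem] at hx
    obtain ⟨j, hj, rfl⟩ := hx
    have hjn : j < n := by rw [← hlen]; exact hj
    rcases Nat.lt_or_ge j k with h | h
    · right
      have := hones j h hjn
      rwa [List.getD_eq_getElem sl 0 hj] at this
    · left
      have := hzeros j h hjn
      rwa [List.getD_eq_getElem sl 0 hj] at this
  intro i
  have hmemi : Real.sqrt (g i) ∈ sl := by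
    rw [hperm.mem_iff, hl, List.mem_map]
    exact ⟨g i, by rw [List.mem_ofFn]; exact ⟨i, rfl⟩, rfl⟩
  rcases h01 _ hmemi with h | h
  · left
    exact (Real.sqrt_eq_zero (hg0 i)).mp h
  · right
    have := Real.sq_sqrt (hg0 i)
    rw [h] at this
    simpa using this.symm

lemma idem_of_eig01 {H : Matrix (Fin n) (Fin n) ℝ} (hH : H.IsHermitian)
    (h01 : ∀ i, hH.eigenvalues i = 0 ∨ hH.eigenvalues i = 1) : H * H = H := by
  classical
  set U : Matrix (Fin n) (Fin n) ℝ := hH.eigenvectorUnitary.1 with hU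
  set D : Matrix (Fin n) (Fin n) ℝ := diagonal (RCLike.ofReal ∘ hH.eigenvalues) with hD
  have hUU' : Uᴴ * U = 1 := Matrix.mem_unitaryGroup_iff'.mp hH.eigenvectorUnitary.2
  have hsp : H = U * D * Uᴴ := hH.spectral_theorem
  have hDD : D * D = D := by
    rw [hD, Matrix.diagonal_mul_diagonal]
    have heq : (fun i => (RCLike.ofReal ∘ hH.eigenvalues) i
        * (RCLike.ofReal ∘ hH.eigenvalues) i : Fin n → ℝ)
        = (RCLike.ofReal ∘ hH.eigenvalues : Fin n → ℝ) := by
      funext i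
      rcases h01 i with h | h <;> simp [h]
    rw [heq]
  rw [hsp]
  calc U * D * Uᴴ * (U * D * Uᴴ) = U * (D * ((Uᴴ * U) * (D * Uᴴ))) := by
        simp only [Matrix.mul_assoc]
    _ = U * (D * (D * Uᴴ)) := by rw [hUU', Matrix.one_mul]
    _ = U * ((D * D) * Uᴴ) := by rw [Matrix.mul_assoc]
    _ = U * (D * Uᴴ) := by rw [hDD]
    _ = U * D * Uᴴ := by rw [Matrix.mul_assoc]

lemma trace_eq_sum_eigs {H : Matrix (Fin n) (Fin n) ℝ} (hH : H.IsHermitian) :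
    H.trace = ∑ i, hH.eigenvalues i := by
  classical
  have hUU' : (star hH.eigenvectorUnitary.1 : Matrix (Fin n) (Fin n) ℝ)
      * hH.eigenvectorUnitary.1 = 1 :=
    Matrix.mem_unitaryGroup_iff'.mp hH.eigenvectorUnitary.2
  have hUU : (hH.eigenvectorUnitary.1 : Matrix (Fin n) (Fin n) ℝ)
      * (hH.eigenvectorUnitary.1)ᴴ = 1 :=
    Matrix.mem_unitaryGroup_iff.mp hH.eigenvectorUnitary.2
  rw [show H.trace = ((hH.eigenvectorUnitary.1)ᴴ * H * hH.eigenvectorUnitary.1).trace by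
    rw [Matrix.trace_mul_cycle, hUU, Matrix.one_mul], conj_diag hH, Matrix.trace_diagonal]

lemma trace_eq_rank (A : Matrix (Fin m) (Fin n) ℝ) (k : ℕ) (hrk : A.rank = k)
    (h01 : ∀ i, (Matrix.isHermitian_conjTranspose_mul_self A).eigenvalues i = 0 ∨
         (Matrix.isHermitian_conjTranspose_mul_self A).eigenvalues i = 1) :
    (Aᴴ * A).trace = k := by
  classical
  set hH := Matrix.isHermitian_conjTranspose_mul_self A with hHdef
  set g : Fin n → ℝ := hH.eigenvalues with hg
  have hcard : (Finset.univ.filter (fun i => g i ≠ 0)).card = k := by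
    rw [← Fintype.card_subtype]
    rw [← hH.rank_eq_card_non_zero_eigs, Matrix.rank_conjTranspose_mul_self, hrk]
  rw [trace_eq_sum_eigs hH]
  have e1 : ∑ i, g i = ∑ i, (if g i ≠ 0 then (1:ℝ) else 0) := by
    refine Finset.sum_congr rfl fun i _ => ?_
    rcases h01 i with h | h <;> simp [← hg, h]
  rw [← hg, e1, Finset.sum_boole, hcard]

lemma tip_self_eq_rank (A : Matrix (Fin m) (Fin n) ℝ) (k : ℕ) (hrk : A.rank = k)
    (h01 : ∀ i, (Matrix.isHermitian_conjTranspose_mul_self A).eigenvalues i = 0 ∨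
         (Matrix.isHermitian_conjTranspose_mul_self A).eigenvalues i = 1) :
    tip A A = k := by
  rw [tip_eq_traceH]
  exact trace_eq_rank A k hrk h01

lemma nucNorm_smul_rank (A : Matrix (Fin m) (Fin n) ℝ) (k : ℕ) (hrk : A.rank = k)
    (h01 : ∀ i, (Matrix.isHermitian_conjTranspose_mul_self A).eigenvalues i = 0 ∨
         (Matrix.isHermitian_conjTranspose_mul_self A).eigenvalues i = 1)
    (c : ℝ) (hc : 0 ≤ c) : nucNorm (c • A) = c * k := by
  classical
  have hP := idem_of_eig01 (Matrix.isHermitian_conjTranspose_mul_self A) h01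
  set hH := Matrix.isHermitian_conjTranspose_mul_self (c • A) with hHdef
  have hB : (c • A)ᴴ * (c • A) = (c * c) • (Aᴴ * A) := by
    rw [Matrix.conjTranspose_smul, star_trivial, Matrix.smul_mul, Matrix.mul_smul, smul_smul]
  have hsq : ((c • A)ᴴ * (c • A)) * ((c • A)ᴴ * (c • A)) = (c * c) • ((c • A)ᴴ * (c • A)) := by
    rw [hB, Matrix.smul_mul, Matrix.mul_smul, hP]
  have hsq_i : ∀ i, Real.sqrt (hH.eigenvalues i)
      = c * (if hH.eigenvalues i ≠ 0 then (1:ℝ) else 0) := by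
    intro i
    have hev := eig_of_sq hH (c * c) hsq i
    by_cases h0 : hH.eigenvalues i = 0
    · rw [if_neg (not_not.mpr h0), h0, Real.sqrt_zero, mul_zero]
    · have he : hH.eigenvalues i = c * c := mul_right_cancel₀ h0 hev
      rw [if_pos h0, he, Real.sqrt_mul_self hc, mul_one]
  have hcard : (Finset.univ.filter (fun i => hH.eigenvalues i ≠ 0)).card = (c • A).rank := by
    rw [← Fintype.card_subtype, ← hH.rank_eq_card_non_zero_eigs,
      Matrix.rank_conjTranspose_mul_self]
  have hnuc : nucNorm (c • A) = ∑ i, Real.sqrt (hH.eigenvalues i) :=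
    trace_sqrt_eq (Matrix.posSemidef_conjTranspose_mul_self (c • A))
  rw [hnuc, Finset.sum_congr rfl (fun i _ => hsq_i i), ← Finset.mul_sum, Finset.sum_boole, hcard]
  rcases hc.lt_or_eq with hcp | hc0
  · rw [Matrix.rank_smul_of_mem_nonZeroDivisors A (mem_nonZeroDivisors_of_ne_zero hcp.ne'), hrk]
  · subst hc0; simp

lemma nucNorm_eq_rank (A : Matrix (Fin m) (Fin n) ℝ) (k : ℕ) (hrk : A.rank = k)
    (h01 : ∀ i, (Matrix.isHermitian_conjTranspose_mul_self A).eigenvalues i = 0 ∨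
         (Matrix.isHermitian_conjTranspose_mul_self A).eigenvalues i = 1) :
    nucNorm A = k := by
  have := nucNorm_smul_rank A k hrk h01 1 zero_le_one
  rwa [one_smul, one_mul] at this

end Aux

set_option maxHeartbeats 1600000 in
/-- soft-thresholding example: sharpness of the error bound. -/
theorem soft_thresholding_example
    (r rs d₁ d₂ : ℕ) (hrs : 1 ≤ rs) (hr : rs ≤ r)
    (hd₁ : r + rs ≤ d₁) (hd₂ : r + rs ≤ d₂)
    (Mtl Mst : Matrix (Fin d₁) (Fin d₂) ℝ)
    (hrk1 : Mtl.rank = r) (hrk2 : Mst.rank = rs)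
    (horth1 : Mtl * Mstᵀ = 0) (horth2 : Mtlᵀ * Mst = 0)
    (hs1 : ∀ j : ℕ, 1 ≤ j → j ≤ r → singVal Mtl j = 1)
    (hs2 : ∀ j : ℕ, 1 ≤ j → j ≤ rs → singVal Mst j = 1) :
    ∀ lam : ℝ, 0 ≤ lam →
      ((∀ M : Matrix (Fin d₁) (Fin d₂) ℝ,
          (1/2) * frob (max (1 - lam) 0 • Mtl - Mtl) ^ 2
              + lam * nucNorm (max (1 - lam) 0 • Mtl)
            ≤ (1/2) * frob (M - Mtl) ^ 2 + lam * nucNorm M) ∧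
        (∀ M : Matrix (Fin d₁) (Fin d₂) ℝ,
          (1/2) * frob (M - Mtl) ^ 2 + lam * nucNorm M ≤
            (1/2) * frob (max (1 - lam) 0 • Mtl - Mtl) ^ 2
              + lam * nucNorm (max (1 - lam) 0 • Mtl)
          → M = max (1 - lam) 0 • Mtl)) ∧
      (lam ≤ 1 →
        frob (max (1 - lam) 0 • Mtl - Mst) = Real.sqrt ((rs : ℝ) + (1 - lam)^2 * r) ∧
        (1 / Real.sqrt 2) * (Real.sqrt rs * lam + Real.sqrt ((r:ℝ) + rs) * (1 - lam)) ≤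
          frob (max (1 - lam) 0 • Mtl - Mst)) := by

  intro lam hlam
  set c : ℝ := max (1 - lam) 0 with hc
  have hc0 : 0 ≤ c := le_max_right _ _
  -- structure facts about Mtl
  have h01tl := eig_analysis Mtl r hrk1 hs1
  have h01st := eig_analysis Mst rs hrk2 hs2
  have hidemtl : (Mtlᴴ * Mtl) * (Mtlᴴ * Mtl) = Mtlᴴ * Mtl :=
    idem_of_eig01 (Matrix.isHermitian_conjTranspose_mul_self Mtl) h01tl
  have htiptl : tip Mtl Mtl = r := tip_self_eq_rank Mtl r hrk1 h01tl
  have htipst : tip Mst Mst = rs := tip_self_eq_rank Mst rs hrk2 h01st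
  have hnuctl : nucNorm Mtl = r := nucNorm_eq_rank Mtl r hrk1 h01tl
  have hnucc : nucNorm (c • Mtl) = c * r := nucNorm_smul_rank Mtl r hrk1 h01tl c hc0
  have horthtip : tip Mtl Mst = 0 := tip_eq_zero_of_orth _ _ horth2
  -- common expansions
  have e2 : frob (c • Mtl - Mtl) ^ 2 = (c - 1)^2 * (r:ℝ) := by
    rw [frob_sq]
    simp only [tip_sub_left, tip_sub_right, tip_smul_left, tip_smul_right, htiptl]
    ring
  have hcases : c = 1 - lam ∨ (c = 0 ∧ 1 ≤ lam) := by
    rcases le_or_gt lam 1 with h | h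
    · left; rw [hc, max_eq_left (by linarith)]
    · right; exact ⟨by rw [hc, max_eq_right (by linarith)], le_of_lt h⟩
  refine ⟨⟨?_, ?_⟩, ?_⟩
  · -- minimality
    intro M
    have e1 : frob (M - Mtl) ^ 2 = tip M M - 2 * tip Mtl M + (r:ℝ) := by
      rw [frob_sq, tip_sub_left, tip_sub_right, tip_sub_right, tip_comm M Mtl, htiptl]
      ring
    have e6 : 0 ≤ tip M M - 2*c*tip Mtl M + c^2 * (r:ℝ) := by
      have h := tip_self_nonneg (M - c • Mtl)
      simp only [tip_sub_left, tip_sub_right, tip_smul_left, tip_smul_right,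
        tip_comm M Mtl, htiptl] at h
      nlinarith [h]
    have hdual : tip Mtl M ≤ nucNorm M := trace_duality Mtl M hidemtl
    have hnN : 0 ≤ nucNorm M := nucNorm_nonneg M
    rw [e1, e2, hnucc]
    rcases hcases with h | ⟨h, h1⟩
    · rw [h] at e6 ⊢
      nlinarith [mul_nonneg hlam (sub_nonneg.mpr hdual), e6]
    · rw [h] at e6 ⊢
      nlinarith [e6, mul_nonneg (sub_nonneg.mpr h1) hnN, hdual]
  · -- uniqueness
    intro M hM
    have e1 : frob (M - Mtl) ^ 2 = tip M M - 2 * tip Mtl M + (r:ℝ) := by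
      rw [frob_sq, tip_sub_left, tip_sub_right, tip_sub_right, tip_comm M Mtl, htiptl]
      ring
    have e6 : tip (M - c • Mtl) (M - c • Mtl)
        = tip M M - 2*c*tip Mtl M + c^2 * (r:ℝ) := by
      simp only [tip_sub_left, tip_sub_right, tip_smul_left, tip_smul_right,
        tip_comm M Mtl, htiptl]
      ring
    have hdual : tip Mtl M ≤ nucNorm M := trace_duality Mtl M hidemtl
    have hnN : 0 ≤ nucNorm M := nucNorm_nonneg M
    rw [e1, e2, hnucc] at hM
    have hkey : tip (M - c • Mtl) (M - c • Mtl) ≤ 0 := by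
      rw [e6]
      rcases hcases with h | ⟨h, h1⟩
      · rw [h] at hM ⊢
        linarith [mul_nonneg hlam (sub_nonneg.mpr hdual), hM]
      · rw [h] at hM ⊢
        linarith [mul_nonneg (sub_nonneg.mpr h1) hnN, hdual, hM]
    have := eq_of_tip_self_nonpos hkey
    have : M = c • Mtl := by
      have h' := sub_eq_zero.mp this
      exact h'
    exact this
  · -- error formula
    intro hl1
    have hceq : c = 1 - lam := by rw [hc, max_eq_left (by linarith)]
    have hfr : frob (c • Mtl - Mst) = Real.sqrt ((rs : ℝ) + (1 - lam)^2 * r) := by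
      rw [frob_eq]
      congr 1
      simp only [tip_sub_left, tip_sub_right, tip_smul_left, tip_smul_right,
        tip_comm Mst Mtl, htiptl, htipst, horthtip, hceq]
      ring
    refine ⟨hfr, ?_⟩
    rw [hfr]
    have hrsnn : (0:ℝ) ≤ (rs:ℝ) := Nat.cast_nonneg rs
    have hrnn : (0:ℝ) ≤ (r:ℝ) := Nat.cast_nonneg r
    set a : ℝ := Real.sqrt rs with ha
    set b : ℝ := Real.sqrt ((r:ℝ) + rs) with hb
    have ha0 : 0 ≤ a := Real.sqrt_nonneg _
    have hb0 : 0 ≤ b := Real.sqrt_nonneg _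
    have ha2 : a^2 = rs := Real.sq_sqrt hrsnn
    have hb2 : b^2 = (r:ℝ) + rs := Real.sq_sqrt (by linarith)
    have hmu : 0 ≤ 1 - lam := by linarith
    have hlhs0 : 0 ≤ 1 / Real.sqrt 2 * (a * lam + b * (1 - lam)) := by
      have : (0:ℝ) ≤ Real.sqrt 2 := Real.sqrt_nonneg 2
      have h1 : 0 ≤ a * lam + b * (1 - lam) :=
        add_nonneg (mul_nonneg ha0 hlam) (mul_nonneg hb0 hmu)
      positivity
    have hargnn : (0:ℝ) ≤ (rs:ℝ) + (1 - lam)^2 * r := by positivity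
    have hs2 : (Real.sqrt 2)^2 = 2 := Real.sq_sqrt (by norm_num)
    have hs2pos : (0:ℝ) < Real.sqrt 2 := Real.sqrt_pos.mpr (by norm_num)
    have hsq : (1 / Real.sqrt 2 * (a * lam + b * (1 - lam)))^2
        ≤ (rs:ℝ) + (1 - lam)^2 * r := by
      have hexp : (1 / Real.sqrt 2 * (a * lam + b * (1 - lam)))^2
          = (a * lam + b * (1 - lam))^2 / 2 := by
        rw [mul_pow, div_pow, one_pow, hs2]
        ring
      rw [hexp]
      nlinarith [sq_nonneg (a * lam - b * (1 - lam)), mul_nonneg hlam hmu,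
        mul_nonneg (mul_nonneg hlam hmu) hrsnn]
    calc 1 / Real.sqrt 2 * (a * lam + b * (1 - lam))
        = Real.sqrt ((1 / Real.sqrt 2 * (a * lam + b * (1 - lam)))^2) :=
          (Real.sqrt_sq hlhs0).symm
      _ ≤ Real.sqrt ((rs:ℝ) + (1 - lam)^2 * r) := Real.sqrt_le_sqrt hsq


end
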